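/- Let α > 0, α ≠ 1, and let A^1,…,A^L (L ≥ 2) be N×N normalized Gram matrices (real symmetric positive semidefinite with all diagonal entries equal to 1/N). Then for every i ∈ {1,…,L}, S_α(A^{[L]}) ≥ S_α(A^{[L]∖i}), where A^{[L]∖i} is the normalized Hadamard product of all matrices except A^i. Summing over i, L·S_α(A^{[L]}) ≥ Σ_{i=1}^L S_α(A^{[L]∖i}), hence Σ_{i=1}^L S_α(A^{[L]∖i}) − (L−1)·S_α(A^{[L]}) ≤ S_α(A^{[L]}); i.e., if S_α(A^{[L]}) > 0, the matrix-based normalized dual total correlation D_α* = (Σ_{i=1}^L S_α(A^{[L]∖i}) − (L−1)·S_α(A^{[L]})) / S_α(A^{[L]}) satisfies D_α* ≤ 1. -/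

import Mathlib

open Matrix

/-- Matrix-based Rényi `α`-entropy
`S_α(A) = (1/(1-α))·log₂(∑ᵢ λᵢ(A)^α)` of a (Hermitian, i.e. real symmetric)
matrix `A`, via its eigenvalues (junk value `0` if `A` is not Hermitian). -/
noncomputable def renyiEntropy {N : ℕ} (α : ℝ) (A : Matrix (Fin N) (Fin N) ℝ) : ℝ :=
  if hA : A.IsHermitian then
    (1 / (1 - α)) * Real.logb 2 (∑ i, hA.eigenvalues i ^ α)
  else 0

/-- Trace-normalized Hadamard (entrywise) product of the family of Gram matrices
indexed by the subset `s`. -/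
noncomputable def jointGram {N L : ℕ} (A : Fin L → Matrix (Fin N) (Fin N) ℝ)
    (s : Finset (Fin L)) : Matrix (Fin N) (Fin N) ℝ :=
  (Matrix.trace (Matrix.of fun i j => ∏ k ∈ s, A k i j))⁻¹ •
    (Matrix.of fun i j => ∏ k ∈ s, A k i j)

section Aux

variable {N : ℕ}

/-- Entrywise spectral decomposition of a real symmetric matrix. -/
private lemma specEntry {A : Matrix (Fin N) (Fin N) ℝ} (hA : A.IsHermitian) (i j : Fin N) :
    A i j = ∑ k, hA.eigenvalues k * (hA.eigenvectorBasis k i * hA.eigenvectorBasis k j) := by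
  conv_lhs => rw [hA.spectral_theorem]
  simp [Matrix.mul_apply, Matrix.mul_diagonal, Matrix.conjTranspose_apply,
    hA.eigenvectorUnitary_apply]
  exact Finset.sum_congr rfl fun k _ => by
    simp [Matrix.diagonal_apply, mul_ite, ite_mul]; ring

/-- Completeness relation `∑ₖ uₖᵢ uₖⱼ = δᵢⱼ` for the eigenvector basis. -/
private lemma sum_basis_mul {A : Matrix (Fin N) (Fin N) ℝ} (hA : A.IsHermitian) (i j : Fin N) :
    ∑ k, hA.eigenvectorBasis k i * hA.eigenvectorBasis k j = if i = j then 1 else 0 := by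
  have h := Unitary.coe_mul_star_self (hA.eigenvectorUnitary)
  have h2 := congrFun (congrFun (congrArg (fun M : Matrix (Fin N) (Fin N) ℝ =>
      (M : Matrix (Fin N) (Fin N) ℝ)) h) i) j
  simp only [Matrix.mul_apply, Matrix.conjTranspose_apply, hA.eigenvectorUnitary_apply,
    Matrix.one_apply, Unitary.coe_star, Matrix.star_apply, star_trivial] at h2
  exact h2

/-- Normalization `∑ᵢ (uₖᵢ)² = 1` for the eigenvector basis. -/
private lemma sum_sq_basis {A : Matrix (Fin N) (Fin N) ℝ} (hA : A.IsHermitian) (k : Fin N) :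
    ∑ i, hA.eigenvectorBasis k i * hA.eigenvectorBasis k i = 1 := by
  have h := hA.eigenvectorBasis.orthonormal
  rw [orthonormal_iff_ite] at h
  have h2 := h k k
  rw [if_pos rfl, PiLp.inner_apply] at h2
  simpa [mul_comm, ← sq] using h2

private lemma herm_symm {A : Matrix (Fin N) (Fin N) ℝ} (hA : A.IsHermitian) (i j : Fin N) :
    A j i = A i j := by
  have h := congrFun (congrFun hA i) j
  rwa [Matrix.conjTranspose_apply, star_trivial] at h

private lemma sum_eig_eq_trace {A : Matrix (Fin N) (Fin N) ℝ} (hA : A.IsHermitian) :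
    ∑ k, hA.eigenvalues k = A.trace := by
  unfold Matrix.trace Matrix.diag
  calc ∑ k, hA.eigenvalues k
      = ∑ k, hA.eigenvalues k * ∑ i, hA.eigenvectorBasis k i * hA.eigenvectorBasis k i := by
        simp [sum_sq_basis]
    _ = ∑ i, ∑ k, hA.eigenvalues k * (hA.eigenvectorBasis k i * hA.eigenvectorBasis k i) := by
        rw [Finset.sum_comm]; simp [Finset.mul_sum]
    _ = ∑ i, A i i := by simp [fun i => (specEntry hA i i).symm]

private lemma posSemidef_smul {A : Matrix (Fin N) (Fin N) ℝ} (hA : A.PosSemidef) {c : ℝ}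
    (hc : 0 ≤ c) : (c • A).PosSemidef := by
  rw [Matrix.posSemidef_iff_dotProduct_mulVec]
  constructor
  · ext i j
    simp only [Matrix.conjTranspose_apply, Matrix.smul_apply, star_trivial, smul_eq_mul]
    rw [herm_symm hA.1 j i]
  · intro x
    simp only [Matrix.smul_mulVec, dotProduct_smul]
    exact smul_nonneg hc (hA.dotProduct_mulVec_nonneg x)

private lemma sum3_comm (f : Fin N → Fin N → Fin N → ℝ) :
    ∑ i, ∑ j, ∑ k, f i j k = ∑ k, ∑ i, ∑ j, f i j k := by
  calc ∑ i, ∑ j, ∑ k, f i j k = ∑ i, ∑ k, ∑ j, f i j k :=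
        Finset.sum_congr rfl fun i _ => Finset.sum_comm
    _ = ∑ k, ∑ i, ∑ j, f i j k := Finset.sum_comm

private lemma quad_expand (D : Matrix (Fin N) (Fin N) ℝ) (y : Fin N → ℝ) :
    star y ⬝ᵥ (D *ᵥ y) = ∑ i, ∑ j, y i * (D i j * y j) := by
  simp only [dotProduct, Matrix.mulVec, Pi.star_apply, star_trivial, Finset.mul_sum]

/-- **Schur product theorem** for real matrices. -/
private lemma posSemidef_hadamard {B D : Matrix (Fin N) (Fin N) ℝ} (hB : B.PosSemidef)
    (hD : D.PosSemidef) : (Matrix.of fun i j => B i j * D i j).PosSemidef := by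
  rw [Matrix.posSemidef_iff_dotProduct_mulVec]
  constructor
  · ext i j
    simp only [Matrix.conjTranspose_apply, Matrix.of_apply, star_trivial]
    rw [herm_symm hB.1 j i, herm_symm hD.1 j i]
  · intro x
    set e := hB.1.eigenvalues with he
    set u := fun k => (hB.1.eigenvectorBasis k : Fin N → ℝ) with hu
    have key : star x ⬝ᵥ ((Matrix.of fun i j => B i j * D i j) *ᵥ x)
        = ∑ k, e k * (star (fun i => x i * u k i) ⬝ᵥ (D *ᵥ fun i => x i * u k i)) := by
      rw [quad_expand]
      calc ∑ i, ∑ j, x i * ((Matrix.of fun i j => B i j * D i j) i j * x j)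
          = ∑ i, ∑ j, ∑ k, e k * ((x i * u k i) * (D i j * (x j * u k j))) := by
            refine Finset.sum_congr rfl fun i _ => Finset.sum_congr rfl fun j _ => ?_
            rw [Matrix.of_apply, specEntry hB.1 i j, Finset.sum_mul, Finset.sum_mul,
              Finset.mul_sum]
            exact Finset.sum_congr rfl fun k _ => by ring
        _ = ∑ k, ∑ i, ∑ j, e k * ((x i * u k i) * (D i j * (x j * u k j))) := sum3_comm _
        _ = ∑ k, e k * (star (fun i => x i * u k i) ⬝ᵥ (D *ᵥ fun i => x i * u k i)) := by
            refine Finset.sum_congr rfl fun k _ => ?_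
            rw [quad_expand]
            simp only [Finset.mul_sum]
    rw [key]
    exact Finset.sum_nonneg fun k _ => mul_nonneg (hB.eigenvalues_nonneg k) (hD.dotProduct_mulVec_nonneg _)

/-- Key majorization-style inequality: if `P` is PSD, `C` is PSD with unit diagonal, and
`f` is convex on `[0,∞)`, then `∑ f(λ(P∘C)) ≤ ∑ f(λ(P))`. -/
private lemma sum_f_eig_hadamard_le {P C : Matrix (Fin N) (Fin N) ℝ}
    (hP : P.PosSemidef) (hC : C.PosSemidef) (hCd : ∀ i, C i i = 1)
    (hM : (Matrix.of fun i j => P i j * C i j).IsHermitian)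
    {f : ℝ → ℝ} (hf : ConvexOn ℝ (Set.Ici 0) f) :
    ∑ l, f (hM.eigenvalues l) ≤ ∑ k, f (hP.1.eigenvalues k) := by
  set M : Matrix (Fin N) (Fin N) ℝ := Matrix.of fun i j => P i j * C i j with hMdef
  set p := hP.1.eigenvalues with hp
  set u := fun k => (hP.1.eigenvectorBasis k : Fin N → ℝ) with hu
  set q := hM.eigenvalues with hq
  set v := fun l => (hM.eigenvectorBasis l : Fin N → ℝ) with hv
  set T : Fin N → Fin N → ℝ :=
    fun l k => star (fun i => v l i * u k i) ⬝ᵥ (C *ᵥ fun i => v l i * u k i) with hT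
  have hT0 : ∀ l k, 0 ≤ T l k := fun l k => hC.dotProduct_mulVec_nonneg _
  have hTexp : ∀ l k, T l k = ∑ i, ∑ j, (v l i * u k i) * (C i j * (v l j * u k j)) := by
    intro l k; rw [hT]; exact quad_expand _ _
  have hrow : ∀ l, ∑ k, T l k = 1 := by
    intro l
    calc ∑ k, T l k
        = ∑ k, ∑ i, ∑ j, (v l i * u k i) * (C i j * (v l j * u k j)) :=
          Finset.sum_congr rfl fun k _ => hTexp l k
      _ = ∑ i, ∑ j, ∑ k, (v l i * u k i) * (C i j * (v l j * u k j)) := (sum3_comm _).symm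
      _ = ∑ i, ∑ j, (v l i * (C i j * v l j)) * ∑ k, u k i * u k j := by
          refine Finset.sum_congr rfl fun i _ => Finset.sum_congr rfl fun j _ => ?_
          rw [Finset.mul_sum]
          exact Finset.sum_congr rfl fun k _ => by ring
      _ = ∑ i, v l i * v l i := by
          refine Finset.sum_congr rfl fun i _ => ?_
          rw [Finset.sum_eq_single i]
          · rw [sum_basis_mul hP.1 i i, if_pos rfl, hCd i]; ring
          · intro j _ hji
            rw [sum_basis_mul hP.1 i j, if_neg (fun h => hji h.symm), mul_zero]
          · intro h; exact absurd (Finset.mem_univ i) h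
      _ = 1 := sum_sq_basis hM l
  have hcol : ∀ k, ∑ l, T l k = 1 := by
    intro k
    calc ∑ l, T l k
        = ∑ l, ∑ i, ∑ j, (u k i * v l i) * (C i j * (u k j * v l j)) := by
          refine Finset.sum_congr rfl fun l _ => (hTexp l k).trans ?_
          exact Finset.sum_congr rfl fun i _ => Finset.sum_congr rfl fun j _ => by ring
      _ = ∑ i, ∑ j, ∑ l, (u k i * v l i) * (C i j * (u k j * v l j)) := (sum3_comm _).symm
      _ = ∑ i, ∑ j, (u k i * (C i j * u k j)) * ∑ l, v l i * v l j := by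
          refine Finset.sum_congr rfl fun i _ => Finset.sum_congr rfl fun j _ => ?_
          rw [Finset.mul_sum]
          exact Finset.sum_congr rfl fun l _ => by ring
      _ = ∑ i, u k i * u k i := by
          refine Finset.sum_congr rfl fun i _ => ?_
          rw [Finset.sum_eq_single i]
          · rw [sum_basis_mul hM i i, if_pos rfl, hCd i]; ring
          · intro j _ hji
            rw [sum_basis_mul hM i j, if_neg (fun h => hji h.symm), mul_zero]
          · intro h; exact absurd (Finset.mem_univ i) h
      _ = 1 := sum_sq_basis hP.1 k
  have hqT : ∀ l, q l = ∑ k, T l k • p k := by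
    intro l
    have hMv : M *ᵥ v l = q l • v l := hM.mulVec_eigenvectorBasis l
    have h1 : star (v l) ⬝ᵥ (M *ᵥ v l) = q l := by
      rw [hMv]
      simp only [dotProduct, Pi.smul_apply, Pi.star_apply, star_trivial, smul_eq_mul]
      calc ∑ i, v l i * (q l * v l i) = q l * ∑ i, v l i * v l i := by
            rw [Finset.mul_sum]; exact Finset.sum_congr rfl fun i _ => by ring
        _ = q l := by rw [sum_sq_basis hM l, mul_one]
    rw [← h1, quad_expand]
    calc ∑ i, ∑ j, v l i * (M i j * v l j)
        = ∑ i, ∑ j, ∑ k, p k • ((v l i * u k i) * (C i j * (v l j * u k j))) := by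
          refine Finset.sum_congr rfl fun i _ => Finset.sum_congr rfl fun j _ => ?_
          rw [hMdef, Matrix.of_apply, specEntry hP.1 i j, Finset.sum_mul, Finset.sum_mul,
            Finset.mul_sum]
          exact Finset.sum_congr rfl fun k _ => by simp only [smul_eq_mul]; ring
      _ = ∑ k, ∑ i, ∑ j, p k • ((v l i * u k i) * (C i j * (v l j * u k j))) := sum3_comm _
      _ = ∑ k, T l k • p k := by
          refine Finset.sum_congr rfl fun k _ => ?_
          rw [hTexp l k]
          simp only [smul_eq_mul, Finset.sum_mul, Finset.mul_sum]
          exact Finset.sum_congr rfl fun i _ => Finset.sum_congr rfl fun j _ => by ring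
  calc ∑ l, f (q l)
      = ∑ l, f (∑ k, T l k • p k) := Finset.sum_congr rfl fun l _ => by rw [hqT l]
    _ ≤ ∑ l, ∑ k, T l k • f (p k) := by
        refine Finset.sum_le_sum fun l _ => ?_
        exact hf.map_sum_le (fun k _ => hT0 l k) (hrow l)
          (fun k _ => Set.mem_Ici.mpr (hP.eigenvalues_nonneg k))
    _ = ∑ k, (∑ l, T l k) * f (p k) := by
        rw [Finset.sum_comm]
        exact Finset.sum_congr rfl fun k _ => by rw [Finset.sum_mul]; rfl
    _ = ∑ k, f (p k) := Finset.sum_congr rfl fun k _ => by rw [hcol k, one_mul]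

/-- Positivity of `∑ λᵢ^α` for a PSD matrix of trace 1. -/
private lemma sum_rpow_eig_pos {A : Matrix (Fin N) (Fin N) ℝ} (hA : A.PosSemidef)
    (htr : A.trace = 1) {α : ℝ} (hα : 0 < α) :
    0 < ∑ k, hA.1.eigenvalues k ^ α := by
  have hsum : ∑ k, hA.1.eigenvalues k = 1 := by rw [sum_eig_eq_trace hA.1, htr]
  have hex : ∃ k : Fin N, 0 < hA.1.eigenvalues k := by
    by_contra h
    push_neg at h
    have : (∑ k, hA.1.eigenvalues k) ≤ 0 := Finset.sum_nonpos fun k _ => h k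
    rw [hsum] at this; linarith
  obtain ⟨k, hk⟩ := hex
  exact Finset.sum_pos' (fun l _ => Real.rpow_nonneg (hA.eigenvalues_nonneg l) α)
    ⟨k, Finset.mem_univ k, Real.rpow_pos_of_pos hk α⟩

/-- Core entropy inequality: Hadamard multiplication by a correlation matrix (PSD with
unit diagonal) does not decrease the Rényi entropy of a trace-one PSD matrix. -/
private lemma renyi_hadamard_le {α : ℝ} (hα : 0 < α) (hα1 : α ≠ 1)
    {P C : Matrix (Fin N) (Fin N) ℝ} (hP : P.PosSemidef) (htrP : P.trace = 1)
    (hC : C.PosSemidef) (hCd : ∀ i, C i i = 1) :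
    renyiEntropy α P ≤ renyiEntropy α (Matrix.of fun i j => P i j * C i j) := by
  set M : Matrix (Fin N) (Fin N) ℝ := Matrix.of fun i j => P i j * C i j with hMdef
  have hMpsd : M.PosSemidef := posSemidef_hadamard hP hC
  have hMherm : M.IsHermitian := hMpsd.1
  have htrM : M.trace = 1 := by
    unfold Matrix.trace Matrix.diag
    calc ∑ i, M i i = ∑ i, P i i := by
          refine Finset.sum_congr rfl fun i _ => ?_
          simp only [hMdef, Matrix.of_apply, hCd i, mul_one]
      _ = 1 := htrP
  have hSP : 0 < ∑ k, hP.1.eigenvalues k ^ α := sum_rpow_eig_pos hP htrP hα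
  have hSM : 0 < ∑ k, hMherm.eigenvalues k ^ α := by
    have := sum_rpow_eig_pos hMpsd htrM hα
    convert this using 2
  rw [renyiEntropy, renyiEntropy, dif_pos hP.1, dif_pos hMherm]
  rcases lt_or_gt_of_ne hα1 with hlt | hgt
  · have hconc : ConcaveOn ℝ (Set.Ici 0) fun x : ℝ => x ^ α :=
      Real.concaveOn_rpow hα.le hlt.le
    have hconv : ConvexOn ℝ (Set.Ici 0) fun x : ℝ => -(x ^ α) := hconc.neg
    have h := sum_f_eig_hadamard_le hP hC hCd hMherm hconv
    simp only [Finset.sum_neg_distrib, neg_le_neg_iff] at h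
    have hlog := Real.logb_le_logb_of_le (b := 2) one_lt_two hSP h
    have hcoef : 0 ≤ 1 / (1 - α) := by
      have : (0:ℝ) < 1 - α := by linarith
      positivity
    exact mul_le_mul_of_nonneg_left hlog hcoef
  · have hconv : ConvexOn ℝ (Set.Ici 0) fun x : ℝ => x ^ α := convexOn_rpow hgt.le
    have h := sum_f_eig_hadamard_le hP hC hCd hMherm hconv
    have hlog := Real.logb_le_logb_of_le (b := 2) one_lt_two hSM h
    have hcoef : 1 / (1 - α) ≤ 0 := by
      apply div_nonpos_of_nonneg_of_nonpos <;> linarith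
    exact mul_le_mul_of_nonpos_left hlog hcoef

end Aux

theorem matrix_dual_total_correlation_le_one {N L : ℕ} (hN : 0 < N) (hL : 2 ≤ L)
    (α : ℝ) (hα : 0 < α) (hα1 : α ≠ 1)
    (A : Fin L → Matrix (Fin N) (Fin N) ℝ)
    (hpsd : ∀ i, (A i).PosSemidef)
    (hdiag : ∀ i, ∀ j, A i j j = 1 / (N : ℝ)) :
    (∀ i : Fin L,
      renyiEntropy α (jointGram A (Finset.univ.erase i))
        ≤ renyiEntropy α (jointGram A Finset.univ)) ∧
    (∑ i : Fin L, renyiEntropy α (jointGram A (Finset.univ.erase i)))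
      ≤ (L : ℝ) * renyiEntropy α (jointGram A Finset.univ) ∧
    (∑ i : Fin L, renyiEntropy α (jointGram A (Finset.univ.erase i)))
        - (L - 1 : ℝ) * renyiEntropy α (jointGram A Finset.univ)
      ≤ renyiEntropy α (jointGram A Finset.univ) ∧
    (0 < renyiEntropy α (jointGram A Finset.univ) →
      ((∑ i : Fin L, renyiEntropy α (jointGram A (Finset.univ.erase i)))
          - (L - 1 : ℝ) * renyiEntropy α (jointGram A Finset.univ)) /
        renyiEntropy α (jointGram A Finset.univ) ≤ 1) := by
  have hNR : (0:ℝ) < (N:ℝ) := by exact_mod_cast hN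
  set X : Finset (Fin L) → Matrix (Fin N) (Fin N) ℝ :=
    fun s => Matrix.of fun i j => ∏ k ∈ s, A k i j with hX
  -- trace of X s
  have htrX : ∀ s : Finset (Fin L), (X s).trace = (N:ℝ) * (1 / (N:ℝ)) ^ s.card := by
    intro s
    unfold Matrix.trace Matrix.diag
    calc ∑ i, X s i i = ∑ i : Fin N, (1 / (N:ℝ)) ^ s.card := by
          refine Finset.sum_congr rfl fun i _ => ?_
          simp only [hX, Matrix.of_apply]
          rw [Finset.prod_congr rfl fun k _ => hdiag k i, Finset.prod_const]
      _ = (N:ℝ) * (1 / (N:ℝ)) ^ s.card := by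
          rw [Finset.sum_const, Finset.card_univ, Fintype.card_fin, nsmul_eq_mul]
  have htrXpos : ∀ s : Finset (Fin L), 0 < (X s).trace := by
    intro s; rw [htrX s]; positivity
  -- X s is PSD
  have hXpsd : ∀ s : Finset (Fin L), (X s).PosSemidef := by
    intro s
    induction s using Finset.induction_on with
    | empty =>
      rw [Matrix.posSemidef_iff_dotProduct_mulVec]
      constructor
      · ext i j
        simp [hX, Matrix.conjTranspose_apply]
      · intro x
        have : star x ⬝ᵥ (X ∅ *ᵥ x) = (∑ i, x i) * (∑ i, x i) := by
          rw [quad_expand]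
          simp only [hX, Matrix.of_apply, Finset.prod_empty, one_mul]
          rw [Finset.sum_mul]
          exact Finset.sum_congr rfl fun i _ => by rw [Finset.mul_sum]
        rw [this]
        exact mul_self_nonneg _
    | @insert a s ha ih =>
      have heq : X (insert a s) = Matrix.of fun i j => A a i j * X s i j := by
        ext i j
        simp only [hX, Matrix.of_apply]
        exact Finset.prod_insert ha
      rw [heq]
      exact posSemidef_hadamard (hpsd a) ih
  -- jointGram facts
  have hJG : ∀ s : Finset (Fin L), jointGram A s = ((X s).trace)⁻¹ • X s := fun s => rfl
  have hJGpsd : ∀ s : Finset (Fin L), (jointGram A s).PosSemidef := by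
    intro s
    rw [hJG s]
    exact posSemidef_smul (hXpsd s) (inv_nonneg.mpr (htrXpos s).le)
  have hJGtr : ∀ s : Finset (Fin L), (jointGram A s).trace = 1 := by
    intro s
    rw [hJG s, Matrix.trace_smul, smul_eq_mul, inv_mul_cancel₀ (htrXpos s).ne']
  -- per-index inequality
  have part1 : ∀ i : Fin L,
      renyiEntropy α (jointGram A (Finset.univ.erase i))
        ≤ renyiEntropy α (jointGram A Finset.univ) := by
    intro i
    set C : Matrix (Fin N) (Fin N) ℝ := (N:ℝ) • A i with hC
    have hCpsd : C.PosSemidef := posSemidef_smul (hpsd i) hNR.le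
    have hCd : ∀ j, C j j = 1 := by
      intro j
      simp only [hC, Matrix.smul_apply, smul_eq_mul, hdiag i j]
      field_simp
    have hkey : (Matrix.of fun a b =>
        jointGram A (Finset.univ.erase i) a b * C a b) = jointGram A Finset.univ := by
      have hcard : (Finset.univ.erase i).card = L - 1 := by
        rw [Finset.card_erase_of_mem (Finset.mem_univ i), Finset.card_univ, Fintype.card_fin]
      have hL1 : L - 1 + 1 = L := by omega
      have htru : (X Finset.univ).trace = (X (Finset.univ.erase i)).trace * (1 / (N:ℝ)) := by
        rw [htrX, htrX, hcard, Finset.card_univ, Fintype.card_fin]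
        conv_lhs => rw [← hL1]
        rw [pow_succ]
        ring
      ext a b
      simp only [Matrix.of_apply, hJG, Matrix.smul_apply, smul_eq_mul]
      have hprod : (X Finset.univ) a b = A i a b * (X (Finset.univ.erase i)) a b := by
        simp only [hX, Matrix.of_apply]
        exact (Finset.mul_prod_erase Finset.univ _ (Finset.mem_univ i)).symm
      rw [htru, hprod, hC]
      have hTe := (htrXpos (Finset.univ.erase i)).ne'
      field_simp
      simp only [Matrix.smul_apply, smul_eq_mul]
      ring
    calc renyiEntropy α (jointGram A (Finset.univ.erase i))
        ≤ renyiEntropy α (Matrix.of fun a b =>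
            jointGram A (Finset.univ.erase i) a b * C a b) :=
          renyi_hadamard_le hα hα1 (hJGpsd _) (hJGtr _) hCpsd hCd
      _ = renyiEntropy α (jointGram A Finset.univ) := by rw [hkey]
  refine ⟨part1, ?_, ?_, ?_⟩
  · calc ∑ i : Fin L, renyiEntropy α (jointGram A (Finset.univ.erase i))
        ≤ ∑ _i : Fin L, renyiEntropy α (jointGram A Finset.univ) :=
          Finset.sum_le_sum fun i _ => part1 i
      _ = (L : ℝ) * renyiEntropy α (jointGram A Finset.univ) := by
          rw [Finset.sum_const, Finset.card_univ, Fintype.card_fin, nsmul_eq_mul]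
  · have h2 : (∑ i : Fin L, renyiEntropy α (jointGram A (Finset.univ.erase i)))
        ≤ (L : ℝ) * renyiEntropy α (jointGram A Finset.univ) := by
      calc ∑ i : Fin L, renyiEntropy α (jointGram A (Finset.univ.erase i))
          ≤ ∑ _i : Fin L, renyiEntropy α (jointGram A Finset.univ) :=
            Finset.sum_le_sum fun i _ => part1 i
        _ = (L : ℝ) * renyiEntropy α (jointGram A Finset.univ) := by
            rw [Finset.sum_const, Finset.card_univ, Fintype.card_fin, nsmul_eq_mul]
    linarith
  · intro hpos
    rw [div_le_one hpos]
    have h2 : (∑ i : Fin L, renyiEntropy α (jointGram A (Finset.univ.erase i)))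
        ≤ (L : ℝ) * renyiEntropy α (jointGram A Finset.univ) := by
      calc ∑ i : Fin L, renyiEntropy α (jointGram A (Finset.univ.erase i))
          ≤ ∑ _i : Fin L, renyiEntropy α (jointGram A Finset.univ) :=
            Finset.sum_le_sum fun i _ => part1 i
        _ = (L : ℝ) * renyiEntropy α (jointGram A Finset.univ) := by
            rw [Finset.sum_const, Finset.card_univ, Fintype.card_fin, nsmul_eq_mul]
    linarith
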